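/- Let k ≥ 1 and let n ≥ 4 be an even integer, and set r = √(1 − (1 − cos(π/n))/(2k)). Then a unit vector l ∈ ℝ^{2k} satisfies ⟨c_{iu}, l⟩² ≥ 1 − r² for all i ∈ {1,…,k} and u ∈ {1,…,n} if and only if for every i ∈ {1,…,k} there exists u_i ∈ {1,…,2n} such that the i-th planar projection of l equals (1/√k)·(cos((2u_i − 1)π/(2n)), sin((2u_i − 1)π/(2n))). In particular, every such l has each planar projection of norm exactly 1/√k. -/

import Mathlib

open scoped RealInnerProductSpace
open Real

/-- The scaffolding ball center `c_{iu}` in `ℝ^{2k}`: the unit vector whose `i`-th planar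
projection is `(cos((u−1)π/n), sin((u−1)π/n))` and whose other coordinates are `0`. -/
noncomputable def ballCenter (k n : ℕ) (i : Fin k) (u : ℕ) :
    EuclideanSpace ℝ (Fin (2 * k)) :=
  (WithLp.equiv 2 (Fin (2 * k) → ℝ)).symm fun idx =>
    if (idx : ℕ) = 2 * (i : ℕ) then Real.cos (((u : ℝ) - 1) * Real.pi / n)
    else if (idx : ℕ) = 2 * (i : ℕ) + 1 then Real.sin (((u : ℝ) - 1) * Real.pi / n)
    else 0

/-- The index of the first coordinate of the `i`-th plane. -/
def idxX (k : ℕ) (i : Fin k) : Fin (2 * k) := ⟨2 * (i : ℕ), by have := i.2; omega⟩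

/-- The index of the second coordinate of the `i`-th plane. -/
def idxY (k : ℕ) (i : Fin k) : Fin (2 * k) := ⟨2 * (i : ℕ) + 1, by have := i.2; omega⟩

lemma inner_ballCenter (k n : ℕ) (i : Fin k) (u : ℕ) (l : EuclideanSpace ℝ (Fin (2 * k))) :
    ⟪ballCenter k n i u, l⟫ =
      Real.cos (((u : ℝ) - 1) * Real.pi / n) * l (idxX k i) +
      Real.sin (((u : ℝ) - 1) * Real.pi / n) * l (idxY k i) := by
  rw [PiLp.inner_apply]
  have key : ∀ idx : Fin (2 * k),
      (inner ℝ (ballCenter k n i u idx) (l idx) : ℝ) =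
        (if idx = idxX k i then Real.cos (((u : ℝ) - 1) * Real.pi / n) * l idx else 0) +
        (if idx = idxY k i then Real.sin (((u : ℝ) - 1) * Real.pi / n) * l idx else 0) := by
    intro idx
    simp only [ballCenter, WithLp.equiv_symm_apply, PiLp.toLp_apply, RCLike.inner_apply, conj_trivial]
    by_cases h1 : (idx : ℕ) = 2 * (i : ℕ)
    · have hx : idx = idxX k i := by apply Fin.ext; exact h1
      have hne : idx ≠ idxY k i := Fin.ne_of_val_ne (show (idx:ℕ) ≠ 2*(i:ℕ)+1 by omega)
      rw [if_pos h1, if_pos hx, if_neg hne]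
      ring
    · by_cases h2 : (idx : ℕ) = 2 * (i : ℕ) + 1
      · have hy : idx = idxY k i := by apply Fin.ext; exact h2
        have hne : idx ≠ idxX k i := Fin.ne_of_val_ne (show (idx:ℕ) ≠ 2*(i:ℕ) by omega)
        rw [if_neg h1, if_pos h2, if_neg hne, if_pos hy]
        ring
      · have hne1 : idx ≠ idxX k i := Fin.ne_of_val_ne h1
        have hne2 : idx ≠ idxY k i := Fin.ne_of_val_ne h2
        rw [if_neg h1, if_neg h2, if_neg hne1, if_neg hne2]
        ring
  rw [Finset.sum_congr rfl fun idx _ => key idx, Finset.sum_add_distrib]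
  rw [Finset.sum_ite_eq' Finset.univ (idxX k i), Finset.sum_ite_eq' Finset.univ (idxY k i)]
  simp

lemma sum_range_pair (f : ℕ → ℝ) (K : ℕ) :
    ∑ j ∈ Finset.range (2 * K), f j = ∑ i ∈ Finset.range K, (f (2 * i) + f (2 * i + 1)) := by
  induction K with
  | zero => simp
  | succ K ih =>
      have : 2 * (K + 1) = (2 * K + 1) + 1 := by ring
      rw [this, Finset.sum_range_succ, Finset.sum_range_succ, ih, Finset.sum_range_succ]
      ring

lemma sum_sq_eq (k : ℕ) (hk : 1 ≤ k) (l : EuclideanSpace ℝ (Fin (2 * k))) (hl : ‖l‖ = 1) :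
    ∑ i : Fin k, (l (idxX k i) ^ 2 + l (idxY k i) ^ 2) = 1 := by
  have h := EuclideanSpace.norm_eq l
  rw [hl] at h
  have h2 : ∑ idx : Fin (2 * k), l idx ^ 2 = 1 := by
    have := congrArg (· ^ 2) h.symm
    simp only [one_pow] at this
    rw [Real.sq_sqrt (by positivity)] at this
    simpa [sq_abs] using this
  have h2k : 0 < 2 * k := by omega
  set f : ℕ → ℝ := fun j => l ⟨j % (2 * k), Nat.mod_lt _ h2k⟩ ^ 2 with hf
  have e1 : ∑ idx : Fin (2 * k), l idx ^ 2 = ∑ j ∈ Finset.range (2 * k), f j := by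
    rw [← Fin.sum_univ_eq_sum_range f]
    apply Finset.sum_congr rfl
    intro idx _
    simp only [hf]
    congr 1
    exact congrArg l (Fin.ext (Nat.mod_eq_of_lt idx.2)).symm
  have e2 : ∀ i : Fin k, f (2 * (i : ℕ)) = l (idxX k i) ^ 2 ∧ f (2 * (i : ℕ) + 1) = l (idxY k i) ^ 2 := by
    intro i
    constructor
    · simp only [hf]
      congr 1
      exact congrArg l (Fin.ext (Nat.mod_eq_of_lt (idxX k i).2))
    · simp only [hf]
      congr 1
      exact congrArg l (Fin.ext (Nat.mod_eq_of_lt (idxY k i).2))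
  rw [← h2, e1, sum_range_pair f k, ← Fin.sum_univ_eq_sum_range (fun i => f (2*i) + f (2*i+1))]
  apply Finset.sum_congr rfl
  intro i _
  rw [(e2 i).1, (e2 i).2]

noncomputable def gfun (n : ℕ) (a b : ℝ) (u : ℕ) : ℝ :=
  Real.cos (((u : ℝ) - 1) * Real.pi / n) * a + Real.sin (((u : ℝ) - 1) * Real.pi / n) * b

lemma trig_identity (a b α d : ℝ) :
    (Real.cos α * a + Real.sin α * b) ^ 2 + (Real.cos (α + d) * a + Real.sin (α + d) * b) ^ 2
      - 2 * (Real.cos α * a + Real.sin α * b) * (Real.cos (α + d) * a + Real.sin (α + d) * b)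
        * Real.cos d
    = (a ^ 2 + b ^ 2) * Real.sin d ^ 2 := by
  have h1 := Real.sin_sq_add_cos_sq α
  have h2 := Real.sin_sq_add_cos_sq d
  rw [Real.cos_add, Real.sin_add]
  linear_combination (-(Real.cos α * a + Real.sin α * b) ^ 2) * h2
    + Real.sin d ^ 2 * (a ^ 2 + b ^ 2) * h1

lemma gfun_succ_top (n : ℕ) (hn : 1 ≤ n) (a b : ℝ) :
    gfun n a b (n + 1) = - gfun n a b 1 := by
  have hn0 : (n : ℝ) ≠ 0 := by positivity
  have h1 : (((n + 1 : ℕ) : ℝ) - 1) * Real.pi / n = Real.pi := by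
    push_cast; field_simp; ring
  have h2 : (((1 : ℕ) : ℝ) - 1) * Real.pi / n = 0 := by norm_num
  rw [gfun, gfun, h1, h2]
  simp

lemma exists_cross (n : ℕ) (hn : 1 ≤ n) (a b : ℝ) :
    ∃ u : ℕ, 1 ≤ u ∧ u ≤ n ∧ gfun n a b u * gfun n a b (u + 1) ≤ 0 := by
  by_contra hc
  push_neg at hc
  have key : ∀ m : ℕ, 1 ≤ m → m ≤ n + 1 → 0 < gfun n a b 1 * gfun n a b m := by
    intro m h1m
    induction m, h1m using Nat.le_induction with
    | base =>
        intro _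
        have h := hc 1 le_rfl hn
        have hne : gfun n a b 1 ≠ 0 := by
          intro h0; rw [h0] at h; simp at h
        exact mul_self_pos.mpr hne
    | succ m hm ih =>
        intro hm1
        have hmn : m ≤ n := by omega
        have ih' := ih (by omega)
        have h := hc m hm hmn
        nlinarith [sq_nonneg (gfun n a b m)]
  have h := key (n + 1) (by omega) le_rfl
  rw [gfun_succ_top n hn a b] at h
  nlinarith [sq_nonneg (gfun n a b 1)]

lemma fact_s_pos (n : ℕ) (hn : 4 ≤ n) : 0 < Real.sin (π / (2 * n)) := by
  apply Real.sin_pos_of_pos_of_lt_pi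
  · positivity
  · have h1 : (1:ℝ) < 2 * n := by
      have : (4:ℝ) ≤ n := by exact_mod_cast hn
      linarith
    exact div_lt_self Real.pi_pos h1

lemma fact_C_pos (n : ℕ) (hn : 4 ≤ n) : 0 < Real.cos (π / n) := by
  apply Real.cos_pos_of_mem_Ioo
  constructor
  · have : (0:ℝ) < π / n := by positivity
    linarith [Real.pi_pos]
  · have h4 : (4:ℝ) ≤ n := by exact_mod_cast hn
    calc π / n ≤ π / 4 := by
          apply div_le_div_of_nonneg_left Real.pi_pos.le (by norm_num) h4
      _ < π / 2 := by linarith [Real.pi_pos]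

lemma fact_one_sub_C (n : ℕ) (hn : 4 ≤ n) :
    1 - Real.cos (π / n) = 2 * Real.sin (π / (2 * n)) ^ 2 := by
  have hn0 : (n:ℝ) ≠ 0 := by positivity
  have h2 : π / n = 2 * (π / (2 * n)) := by field_simp
  rw [h2, Real.cos_two_mul]
  have := Real.sin_sq_add_cos_sq (π / (2 * n))
  linarith

lemma cross_full (n k : ℕ) (hn : 4 ≤ n) (a b : ℝ)
    (H : ∀ u ∈ Finset.Icc 1 n, gfun n a b u ^ 2 ≥ Real.sin (π / (2 * n)) ^ 2 / k) :
    ∃ u : ℕ, 1 ≤ u ∧ u ≤ n ∧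
      gfun n a b u * gfun n a b (u + 1) ≤ 0 ∧
      gfun n a b u ^ 2 ≥ Real.sin (π / (2 * n)) ^ 2 / k ∧
      gfun n a b (u + 1) ^ 2 ≥ Real.sin (π / (2 * n)) ^ 2 / k ∧
      gfun n a b u ^ 2 + gfun n a b (u + 1) ^ 2
        - 2 * gfun n a b u * gfun n a b (u + 1) * Real.cos (π / n)
        = (a ^ 2 + b ^ 2) * Real.sin (π / n) ^ 2 := by
  have hn1 : 1 ≤ n := by omega
  obtain ⟨u, hu1, hun, hcross⟩ := exists_cross n hn1 a b
  have hH : ∀ m : ℕ, 1 ≤ m → m ≤ n + 1 → gfun n a b m ^ 2 ≥ Real.sin (π / (2 * n)) ^ 2 / k := by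
    intro m h1 h2
    rcases Nat.lt_or_ge m (n + 1) with h | h
    · exact H m (Finset.mem_Icc.mpr ⟨h1, by omega⟩)
    · have hm : m = n + 1 := by omega
      rw [hm, gfun_succ_top n hn1 a b, neg_sq]
      exact H 1 (Finset.mem_Icc.mpr ⟨le_rfl, hn1⟩)
  refine ⟨u, hu1, hun, hcross, hH u hu1 (by omega), hH (u + 1) (by omega) (by omega), ?_⟩
  have hn0 : (n : ℝ) ≠ 0 := by positivity
  have hang : (((u + 1 : ℕ) : ℝ) - 1) * π / n = ((u : ℝ) - 1) * π / n + π / n := by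
    push_cast; field_simp; ring
  rw [gfun, gfun, hang]
  exact trig_identity a b (((u : ℝ) - 1) * π / n) (π / n)

lemma plane_forward (n k : ℕ) (hn : 4 ≤ n) (hk : 1 ≤ k) (a b : ℝ)
    (H : ∀ u ∈ Finset.Icc 1 n, gfun n a b u ^ 2 ≥ Real.sin (π / (2 * n)) ^ 2 / k) :
    1 / (k : ℝ) ≤ a ^ 2 + b ^ 2 := by
  obtain ⟨u, hu1, hun, hcross, hp, hq, hid⟩ := cross_full n k hn a b H
  set p := gfun n a b u
  set q := gfun n a b (u + 1)
  set s := Real.sin (π / (2 * n)) with hs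
  set C := Real.cos (π / n) with hC
  have hK0 : (0 : ℝ) < k := by exact_mod_cast hk
  have hs0 : 0 < s := fact_s_pos n hn
  have hC0 : 0 < C := fact_C_pos n hn
  have h1C : 1 - C = 2 * s ^ 2 := fact_one_sub_C n hn
  have ht0 : 0 < s ^ 2 / k := by positivity
  have hpq : s ^ 2 / k ≤ -(p * q) := by
    nlinarith [mul_le_mul hp hq ht0.le (sq_nonneg p), hcross, ht0]
  have hsin2 : Real.sin (π / n) ^ 2 = (1 - C) * (1 + C) := by
    have := Real.sin_sq_add_cos_sq (π / n)
    linear_combination this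
  have E1 : (a ^ 2 + b ^ 2) * ((1 - C) * (1 + C)) ≥ 2 * (s ^ 2 / k) * (1 + C) := by
    rw [← hsin2, ← hid]
    nlinarith [hp, hq, hpq, hC0.le]
  rw [div_le_iff₀ hK0]
  have h1Cpos : (0:ℝ) < 1 + C := by linarith
  have hposf : (0:ℝ) < 2 * s ^ 2 * (1 + C) :=
    mul_pos (by positivity) h1Cpos
  have hkne : (k:ℝ) ≠ 0 := ne_of_gt hK0
  have E3 : 2 * s ^ 2 * (1 + C) ≤ (a ^ 2 + b ^ 2) * (k : ℝ) * (2 * s ^ 2 * (1 + C)) := by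
    calc 2 * s ^ 2 * (1 + C) = (k:ℝ) * (2 * (s ^ 2 / k) * (1 + C)) := by field_simp
      _ ≤ (k:ℝ) * ((a ^ 2 + b ^ 2) * ((1 - C) * (1 + C))) := mul_le_mul_of_nonneg_left E1 hK0.le
      _ = (a ^ 2 + b ^ 2) * (k : ℝ) * ((1 - C) * (1 + C)) := by ring
      _ = (a ^ 2 + b ^ 2) * (k : ℝ) * (2 * s ^ 2 * (1 + C)) := by rw [h1C]
  nlinarith [E3, hposf]

lemma equality_slack (t C p q : ℝ) (ht : 0 < t) (hC : 0 < C)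
    (hcross : p * q ≤ 0) (hp : p ^ 2 ≥ t) (hq : q ^ 2 ≥ t)
    (hid : p ^ 2 + q ^ 2 - 2 * p * q * C = 2 * t * (1 + C)) : p + q = 0 := by
  have hpq : t ≤ -(p * q) := by nlinarith [mul_le_mul hp hq ht.le (sq_nonneg p)]
  have hCX : 0 ≤ C * (-(p * q) - t) := mul_nonneg hC.le (by linarith)
  have hp2 : p ^ 2 = t := by nlinarith
  have hq2 : q ^ 2 = t := by nlinarith
  have hCzero : C * (-(p * q) - t) = 0 := by linear_combination hid / 2 - hp2 / 2 - hq2 / 2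
  have hpqe : p * q = -t := by
    rcases mul_eq_zero.mp hCzero with h' | h'
    · exact absurd h' (ne_of_gt hC)
    · linarith
  have h0 : (p + q) ^ 2 = 0 := by linear_combination hp2 + 2 * hpqe + hq2
  exact pow_eq_zero_iff (n := 2) (by norm_num) |>.mp h0

set_option maxHeartbeats 1000000 in
lemma plane_eq (n k : ℕ) (hn : 4 ≤ n) (hneven : Even n) (hk : 1 ≤ k) (a b : ℝ)
    (H : ∀ u ∈ Finset.Icc 1 n, gfun n a b u ^ 2 ≥ Real.sin (π / (2 * n)) ^ 2 / k)
    (heq : a ^ 2 + b ^ 2 = 1 / (k : ℝ)) :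
    ∃ v ∈ Finset.Icc 1 (2 * n),
      a = (1 / Real.sqrt k) * Real.cos ((2 * (v : ℝ) - 1) * π / (2 * n)) ∧
      b = (1 / Real.sqrt k) * Real.sin ((2 * (v : ℝ) - 1) * π / (2 * n)) := by
  obtain ⟨u, hu1, hun, hcross, hp, hq, hid⟩ := cross_full n k hn a b H
  set p := gfun n a b u with hpdef
  set q := gfun n a b (u + 1) with hqdef
  set s := Real.sin (π / (2 * n)) with hs
  set C := Real.cos (π / n) with hCdef
  have hK0 : (0 : ℝ) < k := by exact_mod_cast hk
  have hkne : (k:ℝ) ≠ 0 := ne_of_gt hK0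
  have hn0 : (n : ℝ) ≠ 0 := by positivity
  have hs0 : 0 < s := fact_s_pos n hn
  have hC0 : 0 < C := fact_C_pos n hn
  have h1C : 1 - C = 2 * s ^ 2 := fact_one_sub_C n hn
  have ht0 : 0 < s ^ 2 / k := by positivity
  have hsin2 : Real.sin (π / n) ^ 2 = (1 - C) * (1 + C) := by
    have := Real.sin_sq_add_cos_sq (π / n)
    linear_combination this
  have hidv : p ^ 2 + q ^ 2 - 2 * p * q * C = 2 * (s ^ 2 / k) * (1 + C) := by
    rw [hid, hsin2, heq, h1C]
    field_simp
    try ring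
  have hsum0 : p + q = 0 := equality_slack (s ^ 2 / k) C p q ht0 hC0 hcross hp hq hidv
  set m := (2 * (u : ℝ) - 1) * π / (2 * n) with hm
  set d := π / (2 * n) with hd
  have hα : ((u : ℝ) - 1) * π / n = m - d := by rw [hm, hd]; field_simp; ring
  have hβ : (((u + 1 : ℕ) : ℝ) - 1) * π / n = m + d := by
    rw [hm, hd]; push_cast; field_simp; ring
  have hsumval : p + q = 2 * Real.cos d * (Real.cos m * a + Real.sin m * b) := by
    rw [hpdef, hqdef, gfun, gfun, hα, hβ, Real.cos_sub, Real.sin_sub, Real.cos_add, Real.sin_add]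
    ring
  have hcosd : 0 < Real.cos d := by
    apply Real.cos_pos_of_mem_Ioo
    constructor
    · have : (0:ℝ) < d := by rw [hd]; positivity
      linarith [Real.pi_pos]
    · rw [hd]
      have h4 : (4:ℝ) ≤ n := by exact_mod_cast hn
      calc π / (2 * n) ≤ π / 8 := by
            apply div_le_div_of_nonneg_left Real.pi_pos.le (by norm_num) (by linarith)
        _ < π / 2 := by linarith [Real.pi_pos]
  have horth : Real.cos m * a + Real.sin m * b = 0 := by
    have h := hsum0
    rw [hsumval] at h
    rcases mul_eq_zero.mp h with h' | h'
    · exact absurd h' (by positivity)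
    · exact h'
  set w := Real.cos m * b - Real.sin m * a with hw
  have hm1 := Real.sin_sq_add_cos_sq m
  have ha : a = -Real.sin m * w := by
    rw [hw]; linear_combination Real.cos m * horth - a * hm1
  have hb : b = Real.cos m * w := by
    rw [hw]; linear_combination Real.sin m * horth - b * hm1
  have hw2 : w ^ 2 = 1 / (k : ℝ) := by
    rw [← heq, ha, hb]; linear_combination (-(w ^ 2)) * hm1
  have hsqrtk : (0:ℝ) < Real.sqrt k := Real.sqrt_pos.mpr hK0
  have hsqk : Real.sqrt k ^ 2 = (k:ℝ) := Real.sq_sqrt hK0.le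
  have hwpm : w = 1 / Real.sqrt k ∨ w = -(1 / Real.sqrt k) := by
    have hinv : (1 / Real.sqrt k) ^ 2 = 1 / (k:ℝ) := by
      rw [div_pow, one_pow, hsqk]
    have h0 : (w - 1 / Real.sqrt k) * (w + 1 / Real.sqrt k) = 0 := by
      linear_combination hw2 - hinv
    rcases mul_eq_zero.mp h0 with h' | h'
    · left; linarith
    · right; linarith
  obtain ⟨n', rfl⟩ : ∃ n', n = 2 * n' := by
    obtain ⟨m', hm'⟩ := hneven; exact ⟨m', by omega⟩
  have hn' : 2 ≤ n' := by omega
  rcases hwpm with hwv | hwv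
  · refine ⟨u + n', Finset.mem_Icc.mpr ⟨by omega, by omega⟩, ?_, ?_⟩
    · have hT : (2 * ((u + n' : ℕ) : ℝ) - 1) * π / (2 * (2 * n' : ℕ)) = m + π / 2 := by
        rw [hm]; push_cast; field_simp; ring
      rw [hT, Real.cos_add, Real.cos_pi_div_two, Real.sin_pi_div_two, ha, hwv]
      ring
    · have hT : (2 * ((u + n' : ℕ) : ℝ) - 1) * π / (2 * (2 * n' : ℕ)) = m + π / 2 := by
        rw [hm]; push_cast; field_simp; ring
      rw [hT, Real.sin_add, Real.cos_pi_div_two, Real.sin_pi_div_two, hb, hwv]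
      ring
  · rcases le_or_gt u n' with hcase | hcase
    · refine ⟨u + 3 * n', Finset.mem_Icc.mpr ⟨by omega, by omega⟩, ?_, ?_⟩
      all_goals {
        have hT : (2 * ((u + 3 * n' : ℕ) : ℝ) - 1) * π / (2 * (2 * n' : ℕ)) = m + 3 * (π / 2) := by
          rw [hm]; push_cast; field_simp; ring
        have hc32 : Real.cos (3 * (π / 2)) = 0 := by
          rw [show (3 * (π / 2) : ℝ) = π + π / 2 by ring, Real.cos_add]; simp
        have hs32 : Real.sin (3 * (π / 2)) = -1 := by
          rw [show (3 * (π / 2) : ℝ) = π + π / 2 by ring, Real.sin_add]; simp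
        first
          | (rw [hT, Real.cos_add, hc32, hs32, ha, hwv]; ring)
          | (rw [hT, Real.sin_add, hc32, hs32, hb, hwv]; ring) }
    · refine ⟨u - n', Finset.mem_Icc.mpr ⟨by omega, by omega⟩, ?_, ?_⟩
      all_goals {
        have hT : (2 * ((u - n' : ℕ) : ℝ) - 1) * π / (2 * (2 * n' : ℕ)) = m - π / 2 := by
          rw [hm]
          have hcast : ((u - n' : ℕ) : ℝ) = (u : ℝ) - n' := by
            push_cast [Nat.cast_sub (by omega : n' ≤ u)]; ring
          rw [hcast]; push_cast; field_simp; ring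
        first
          | (rw [hT, Real.cos_sub, Real.cos_pi_div_two, Real.sin_pi_div_two, ha, hwv]; ring)
          | (rw [hT, Real.sin_sub, Real.cos_pi_div_two, Real.sin_pi_div_two, hb, hwv]; ring) }

lemma odd_cos_sq (n : ℕ) (hn : 4 ≤ n) (hneven : Even n) (j : ℤ) :
    Real.sin (π / (2 * n)) ^ 2 ≤ Real.cos (((2 * j + 1 : ℤ) : ℝ) * π / (2 * n)) ^ 2 := by
  have hn0 : (n : ℝ) ≠ 0 := by positivity
  have h2n0 : (0:ℤ) < 2 * (n:ℤ) := by positivity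
  set q : ℤ := (2 * j + 1) / (2 * (n:ℤ)) with hqdef
  set m0 : ℤ := (2 * j + 1) % (2 * (n:ℤ)) with hm0def
  have hdecomp : 2 * (n:ℤ) * q + m0 = 2 * j + 1 := Int.mul_ediv_add_emod _ _
  have hm0nonneg : 0 ≤ m0 := Int.emod_nonneg _ (by omega)
  have hm0lt : m0 < 2 * (n:ℤ) := Int.emod_lt_of_pos _ h2n0
  have hdecomp' : 2 * ((n:ℤ) * q) + m0 = 2 * j + 1 := by linarith [hdecomp]
  obtain ⟨n', hn'⟩ := hneven
  have hcastn : (n:ℤ) = (n':ℤ) + (n':ℤ) := by exact_mod_cast hn'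
  have hm0ne : m0 ≠ (n:ℤ) := by omega
  have hang : ((2 * j + 1 : ℤ) : ℝ) * π / (2 * n) = (q:ℝ) * π + (m0:ℝ) * π / (2 * n) := by
    have : ((2 * j + 1 : ℤ) : ℝ) = 2 * (n:ℝ) * (q:ℝ) + (m0:ℝ) := by
      exact_mod_cast congrArg (fun z : ℤ => (z : ℝ)) hdecomp.symm
    rw [this]; field_simp
  have hcq : Real.cos ((q:ℝ) * π) ^ 2 = 1 := by
    have h := Real.sin_sq_add_cos_sq ((q:ℝ) * π)
    rw [Real.sin_int_mul_pi] at h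
    linarith [h]
  have hsq : Real.cos (((2 * j + 1 : ℤ) : ℝ) * π / (2 * n)) ^ 2
      = Real.cos ((m0:ℝ) * π / (2 * n)) ^ 2 := by
    rw [hang, Real.cos_add, Real.sin_int_mul_pi]
    linear_combination Real.cos ((m0:ℝ) * π / (2 * n)) ^ 2 * hcq
  rw [hsq]
  have hs0 : 0 ≤ Real.sin (π / (2 * n)) := (fact_s_pos n hn).le
  have hpos : (0:ℝ) < π / (2 * n) := by positivity
  rcases lt_or_gt_of_ne hm0ne with hlt | hgt
  · -- m0 ≤ n - 1
    have hle : (m0:ℝ) ≤ (n:ℝ) - 1 := by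
      have : m0 ≤ (n:ℤ) - 1 := by omega
      exact_mod_cast this
    have hkey : Real.cos (((n:ℝ) - 1) * π / (2 * n)) ≤ Real.cos ((m0:ℝ) * π / (2 * n)) := by
      apply Real.cos_le_cos_of_nonneg_of_le_pi
      · positivity
      · have hnr : (1:ℝ) ≤ (n:ℝ) := by exact_mod_cast (by omega : 1 ≤ n)
        rw [div_le_iff₀ (by positivity : (0:ℝ) < 2 * n)]
        nlinarith [Real.pi_pos]
      · gcongr
    have heqv : Real.cos (((n:ℝ) - 1) * π / (2 * n)) = Real.sin (π / (2 * n)) := by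
      rw [show ((n:ℝ) - 1) * π / (2 * n) = π / 2 - π / (2 * n) by field_simp,
        Real.cos_pi_div_two_sub]
    rw [heqv] at hkey
    nlinarith [hkey, hs0]
  · -- m0 ≥ n + 1
    have hge : (n:ℝ) + 1 ≤ (m0:ℝ) := by
      have : (n:ℤ) + 1 ≤ m0 := by omega
      exact_mod_cast this
    have hm0r : (m0:ℝ) ≤ 2 * n - 1 := by
      have : m0 ≤ 2 * (n:ℤ) - 1 := by omega
      exact_mod_cast this
    have hkey : Real.cos ((m0:ℝ) * π / (2 * n)) ≤ Real.cos (((n:ℝ) + 1) * π / (2 * n)) := by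
      apply Real.cos_le_cos_of_nonneg_of_le_pi
      · positivity
      · rw [div_le_iff₀ (by positivity : (0:ℝ) < 2 * n)]
        nlinarith [Real.pi_pos]
      · gcongr
    have heqv : Real.cos (((n:ℝ) + 1) * π / (2 * n)) = -Real.sin (π / (2 * n)) := by
      rw [show ((n:ℝ) + 1) * π / (2 * n) = π / 2 + π / (2 * n) by field_simp,
        Real.cos_add, Real.cos_pi_div_two, Real.sin_pi_div_two]
      ring
    rw [heqv] at hkey
    nlinarith [hkey, hs0]

lemma plane_backward (n k : ℕ) (hn : 4 ≤ n) (hneven : Even n) (hk : 1 ≤ k)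
    (v : ℕ) (a b : ℝ)
    (ha : a = (1 / Real.sqrt k) * Real.cos ((2 * (v : ℝ) - 1) * π / (2 * n)))
    (hb : b = (1 / Real.sqrt k) * Real.sin ((2 * (v : ℝ) - 1) * π / (2 * n))) :
    ∀ u ∈ Finset.Icc 1 n, gfun n a b u ^ 2 ≥ Real.sin (π / (2 * n)) ^ 2 / k := by
  intro u hu
  have hK0 : (0 : ℝ) < k := by exact_mod_cast hk
  have hn0 : (n : ℝ) ≠ 0 := by positivity
  have hsqk : Real.sqrt k ^ 2 = (k:ℝ) := Real.sq_sqrt hK0.le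
  set j : ℤ := (u : ℤ) - v - 1 with hjdef
  have hang : ((u:ℝ) - 1) * π / n - (2 * (v:ℝ) - 1) * π / (2 * n)
      = ((2 * j + 1 : ℤ) : ℝ) * π / (2 * n) := by
    rw [hjdef]; push_cast; field_simp; ring
  have hval : gfun n a b u = (1 / Real.sqrt k)
      * Real.cos (((2 * j + 1 : ℤ) : ℝ) * π / (2 * n)) := by
    rw [gfun, ha, hb, ← hang, Real.cos_sub]
    ring
  rw [hval, mul_pow, div_pow, one_pow, hsqk]
  have hodd := odd_cos_sq n hn hneven j
  rw [ge_iff_le]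
  calc Real.sin (π / (2 * n)) ^ 2 / k = Real.sin (π / (2 * n)) ^ 2 * (1 / k) := by ring
    _ ≤ Real.cos (((2 * j + 1 : ℤ) : ℝ) * π / (2 * n)) ^ 2 * (1 / k) :=
        mul_le_mul_of_nonneg_right hodd (by positivity)
    _ = 1 / (k:ℝ) * Real.cos (((2 * j + 1 : ℤ) : ℝ) * π / (2 * n)) ^ 2 := by ring

/-- A unit vector `l ∈ ℝ^{2k}` satisfies `⟪c_{iu}, l⟫² ≥ 1 − r²` for all `i ∈ {1,…,k}`,
`u ∈ {1,…,n}` (where `r = √(1 − (1 − cos(π/n))/(2k))`) iff each planar projection of `l`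
is one of the `2n` apices `(1/√k)·(cos((2u_i−1)π/(2n)), sin((2u_i−1)π/(2n)))`,
`u_i ∈ {1,…,2n}`; in particular each planar projection of such an `l` has norm `1/√k`. -/
theorem stabbing_directions_characterization (k n : ℕ) (hk : 1 ≤ k) (hn : 4 ≤ n)
    (hneven : Even n) (r : ℝ)
    (hr : r = Real.sqrt (1 - (1 - Real.cos (Real.pi / n)) / (2 * k)))
    (l : EuclideanSpace ℝ (Fin (2 * k))) (hl : ‖l‖ = 1) :
    ((∀ i : Fin k, ∀ u ∈ Finset.Icc 1 n,
        ⟪ballCenter k n i u, l⟫ ^ 2 ≥ 1 - r ^ 2) ↔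
      (∀ i : Fin k, ∃ u ∈ Finset.Icc 1 (2 * n),
        l (idxX k i) = (1 / Real.sqrt k) * Real.cos ((2 * (u : ℝ) - 1) * Real.pi / (2 * n)) ∧
        l (idxY k i) = (1 / Real.sqrt k) * Real.sin ((2 * (u : ℝ) - 1) * Real.pi / (2 * n))))
    ∧ ((∀ i : Fin k, ∀ u ∈ Finset.Icc 1 n,
        ⟪ballCenter k n i u, l⟫ ^ 2 ≥ 1 - r ^ 2) →
      ∀ i : Fin k, Real.sqrt (l (idxX k i) ^ 2 + l (idxY k i) ^ 2) = 1 / Real.sqrt k) := by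

  have hK0 : (0:ℝ) < k := by exact_mod_cast hk
  have hn0 : (n:ℝ) ≠ 0 := by positivity
  have hs0 := fact_s_pos n hn
  have h1C := fact_one_sub_C n hn
  have h1r : 1 - r ^ 2 = Real.sin (π / (2 * n)) ^ 2 / k := by
    have hs1 : Real.sin (π / (2 * n)) ≤ 1 := Real.sin_le_one _
    have hk1 : (1:ℝ) ≤ k := by exact_mod_cast hk
    have harg : 0 ≤ 1 - (1 - Real.cos (π / n)) / (2 * k) := by
      rw [sub_nonneg, div_le_one (by positivity)]
      nlinarith [hs0, hs1, h1C, hk1]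
    rw [hr, Real.sq_sqrt harg, h1C]
    field_simp
    ring
  have main_iff : (∀ i : Fin k, ∀ u ∈ Finset.Icc 1 n, ⟪ballCenter k n i u, l⟫ ^ 2 ≥ 1 - r ^ 2) ↔
      (∀ i : Fin k, ∃ u ∈ Finset.Icc 1 (2 * n),
        l (idxX k i) = (1 / Real.sqrt k) * Real.cos ((2 * (u : ℝ) - 1) * π / (2 * n)) ∧
        l (idxY k i) = (1 / Real.sqrt k) * Real.sin ((2 * (u : ℝ) - 1) * π / (2 * n))) := by
    constructor
    · intro H i
      have Hg : ∀ i' : Fin k, ∀ u ∈ Finset.Icc 1 n,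
          gfun n (l (idxX k i')) (l (idxY k i')) u ^ 2 ≥ Real.sin (π / (2 * n)) ^ 2 / k := by
        intro i' u hu
        have h := H i' u hu
        rw [inner_ballCenter, h1r] at h
        simpa [gfun] using h
      have lower : ∀ i' : Fin k, 1 / (k:ℝ) ≤ l (idxX k i') ^ 2 + l (idxY k i') ^ 2 :=
        fun i' => plane_forward n k hn hk _ _ (Hg i')
      have hsum := sum_sq_eq k hk l hl
      have hconst : ∑ _i : Fin k, (1 / (k:ℝ)) = 1 := by
        rw [Finset.sum_const, Finset.card_univ, Fintype.card_fin, nsmul_eq_mul]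
        field_simp
      have hpointwise := (Finset.sum_eq_sum_iff_of_le
        (s := Finset.univ) (f := fun _ : Fin k => 1/(k:ℝ))
        (g := fun i' : Fin k => l (idxX k i') ^ 2 + l (idxY k i') ^ 2)
        (fun i' _ => lower i')).mp (by rw [hconst, hsum])
      have heqi : l (idxX k i) ^ 2 + l (idxY k i) ^ 2 = 1 / (k:ℝ) :=
        (hpointwise i (Finset.mem_univ i)).symm
      exact plane_eq n k hn hneven hk _ _ (Hg i) heqi
    · intro H i u hu
      obtain ⟨v, hv, hA, hB⟩ := H i
      have h := plane_backward n k hn hneven hk v _ _ hA hB u hu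
      rw [inner_ballCenter, h1r]
      simpa [gfun] using h
  refine ⟨main_iff, ?_⟩
  intro H i
  obtain ⟨v, hv, hA, hB⟩ := main_iff.mp H i
  rw [hA, hB]
  have hsqrtk : (0:ℝ) < Real.sqrt k := Real.sqrt_pos.mpr hK0
  have hcs := Real.sin_sq_add_cos_sq ((2 * (v : ℝ) - 1) * π / (2 * n))
  have hval : (1 / Real.sqrt k * Real.cos ((2 * (v : ℝ) - 1) * π / (2 * n))) ^ 2
      + (1 / Real.sqrt k * Real.sin ((2 * (v : ℝ) - 1) * π / (2 * n))) ^ 2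
      = (1 / Real.sqrt k) ^ 2 := by
    linear_combination (1 / Real.sqrt (k:ℝ)) ^ 2 * hcs
  rw [hval]
  exact Real.sqrt_sq (by positivity)
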